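/- Let (T, ⊑) be a tree in which every two elements have a meet. Then for every nonempty finite subset S of T with |S| = n, the smallest subset of T containing S and closed under the meet operation has at most 2n − 1 elements. -/
import Mathlib


universe u

/-- `c` is strictly `le`-between `a` and `b`. -/
def strictlyBetween {α : Type u} (le : α → α → Prop) (a c b : α) : Prop :=
  (le a c ∧ le c b ∧ c ≠ a ∧ c ≠ b) ∨ (le b c ∧ le c a ∧ c ≠ a ∧ c ≠ b)

/-- The tree relation `⊑` of `T(V, ≤, ⪯)`: `a ⊑ b` iff `a ⪯ b` and there is no `c`
strictly `≤`-between `a` and `b` with `c ⪯ a` and `c ⪯ b`. -/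
def treeRel {α : Type u} (le pre : α → α → Prop) (a b : α) : Prop :=
  pre a b ∧ ¬∃ c, strictlyBetween le a c b ∧ pre c a ∧ pre c b

/-- `s` is well-ordered by `r` (`r` is a reflexive `≤`-style relation):
`r` is total on `s` and every nonempty subset of `s` has an `r`-least element. -/
def IsWellOrderedOn {α : Type u} (r : α → α → Prop) (s : Set α) : Prop :=
  (∀ a ∈ s, ∀ b ∈ s, r a b ∨ r b a) ∧
  ∀ t : Set α, t ⊆ s → t.Nonempty → ∃ m ∈ t, ∀ x ∈ t, r m x

/-- `r` is a (set-theoretic, rooted) tree order: a partial order with a minimum element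
in which the set of predecessors of every element is well-ordered. -/
def IsTreeOrder {α : Type u} (r : α → α → Prop) : Prop :=
  IsPartialOrder α r ∧ (∃ root, ∀ a, r root a) ∧
  ∀ a, IsWellOrderedOn r {b | r b a}

/-- `a` is a leaf of the tree order `r`: it has no strict successor. -/
def isLeaf {α : Type u} (r : α → α → Prop) (a : α) : Prop := ∀ b, r a b → b = a

/-- `b` is a son (immediate successor) of `a` in the tree order `r`. -/
def isSon {α : Type u} (r : α → α → Prop) (a b : α) : Prop :=
  r a b ∧ a ≠ b ∧ ∀ c, r a c → r c b → c = a ∨ c = b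

/-- `a` has exactly two sons in the tree order `r`. -/
def hasTwoSons {α : Type u} (r : α → α → Prop) (a : α) : Prop :=
  ∃ b c, b ≠ c ∧ isSon r a b ∧ isSon r a c ∧ ∀ d, isSon r a d → d = b ∨ d = c

/-- `(le, pre)` is a compatible pair of orders: `le` is a linear order, `pre` a preorder,
`T(V, le, pre)` is defined (i.e. `treeRel le pre` is a tree order), and every element
is either a leaf or has exactly two sons. -/
def CompatPair {α : Type u} (le pre : α → α → Prop) : Prop :=
  IsLinearOrder α le ∧ IsPreorder α pre ∧ IsTreeOrder (treeRel le pre) ∧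
  ∀ a, isLeaf (treeRel le pre) a ∨ hasTwoSons (treeRel le pre) a

/-- `m` is the meet of `a` and `b` in the tree order `r`. -/
def isMeet {α : Type u} (r : α → α → Prop) (a b m : α) : Prop :=
  r m a ∧ r m b ∧ ∀ x, r x a → r x b → r x m

/-- `C` is closed under the meet operation of the tree order `r`. -/
def MeetClosed {α : Type u} (r : α → α → Prop) (C : Set α) : Prop :=
  ∀ a ∈ C, ∀ b ∈ C, ∀ m, isMeet r a b m → m ∈ C


lemma exists_max_finset {α : Type u} (r : α → α → Prop)
    (htr : ∀ {a b c : α}, r a b → r b c → r a c) :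
    ∀ (F : Finset α), F.Nonempty → (∀ x ∈ F, ∀ y ∈ F, r x y ∨ r y x) →
      ∃ m ∈ F, ∀ x ∈ F, r x m := by
  intro F hne
  induction hne using Finset.Nonempty.cons_induction with
  | singleton a =>
      intro htot
      refine ⟨a, Finset.mem_singleton_self a, ?_⟩
      intro x hx
      rw [Finset.mem_singleton] at hx; subst hx
      rcases htot x (Finset.mem_singleton_self x) x (Finset.mem_singleton_self x) with h | h <;>
        exact h
  | cons a s ha hs ih =>
      intro htot
      obtain ⟨m, hmF, hmax⟩ := ih
        (fun x hx y hy => htot x (Finset.mem_cons_of_mem hx) y (Finset.mem_cons_of_mem hy))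
      rcases htot a (Finset.mem_cons_self a s) m (Finset.mem_cons_of_mem hmF) with h | h
      · refine ⟨m, Finset.mem_cons_of_mem hmF, ?_⟩
        intro x hx
        rcases Finset.mem_cons.1 hx with rfl | hx
        · exact h
        · exact hmax x hx
      · refine ⟨a, Finset.mem_cons_self a s, ?_⟩
        intro x hx
        rcases Finset.mem_cons.1 hx with rfl | hx
        · rcases htot x (Finset.mem_cons_self x s) x (Finset.mem_cons_self x s) with h' | h' <;>
            exact h'
        · exact htr (hmax x hx) h

/-- In a tree in which every two elements have a meet, the meet-closure of an `n`-element
nonempty finite set has at most `2n − 1` elements. -/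
theorem meetClosure_card_le {T : Type u} (r : T → T → Prop) (htree : IsTreeOrder r)
    (hmeet : ∀ a b : T, ∃ m, isMeet r a b m) (n : ℕ) (S : Finset T)
    (hS : S.Nonempty) (hcard : S.card = n) :
    (⋂₀ {C : Set T | ↑S ⊆ C ∧ MeetClosed r C}).ncard ≤ 2 * n - 1 := by

  classical
  obtain ⟨hpo, -, hwo⟩ := htree
  have hrefl : ∀ a, r a a := hpo.refl
  have htrans : ∀ {a b c : T}, r a b → r b c → r a c := fun h h' => hpo.trans _ _ _ h h'
  have hanti : ∀ {a b : T}, r a b → r b a → a = b := fun h h' => hpo.antisymm _ _ h h'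
  have hcomp : ∀ {a x y : T}, r x a → r y a → r x y ∨ r y x :=
    fun {a x y} hx hy => (hwo a).1 x hx y hy
  have hμspec : ∀ a b : T, isMeet r a b (Classical.choose (hmeet a b)) :=
    fun a b => Classical.choose_spec (hmeet a b)
  set μ : T → T → T := fun a b => Classical.choose (hmeet a b) with hμdef
  have hμ : ∀ a b, isMeet r a b (μ a b) := hμspec
  have hmeet_uniq : ∀ {a b m : T}, isMeet r a b m → m = μ a b := by
    intro a b m hm
    exact hanti ((hμ a b).2.2 m hm.1 hm.2.1) (hm.2.2 _ (hμ a b).1 (hμ a b).2.1)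
  have hμ_left : ∀ a b, r (μ a b) a := fun a b => (hμ a b).1
  have hμ_right : ∀ a b, r (μ a b) b := fun a b => (hμ a b).2.1
  have hμ_le : ∀ {a b x : T}, r x a → r x b → r x (μ a b) :=
    fun {a b x} h h' => (hμ a b).2.2 x h h'
  have hμ_self : ∀ a, μ a a = a := fun a => (hmeet_uniq ⟨hrefl a, hrefl a, fun _ h _ => h⟩).symm
  have hμ_of_le : ∀ {a b : T}, r b a → μ a b = b :=
    fun {a b} h => (hmeet_uniq ⟨h, hrefl b, fun _ _ h' => h'⟩).symm
  have hμ_comm : ∀ a b, μ a b = μ b a := by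
    intro a b
    exact hmeet_uniq ⟨hμ_right a b, hμ_left a b, fun x h h' => hμ_le h' h⟩
  set cl : Finset T → Set T := fun S => ⋂₀ {C : Set T | ↑S ⊆ C ∧ MeetClosed r C} with hcldef
  have hcl_sub : ∀ S : Finset T, (S : Set T) ⊆ cl S := by
    intro S x hx C hC; exact hC.1 hx
  have hcl_min : ∀ (S : Finset T) (C : Set T), ↑S ⊆ C → MeetClosed r C → cl S ⊆ C := by
    intro S C h1 h2 x hx; exact hx C ⟨h1, h2⟩
  have hcl_closed : ∀ S : Finset T, MeetClosed r (cl S) := by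
    intro S x hx y hy m hm C hC
    exact hC.2 x (hx C hC) y (hy C hC) m hm
  have main : ∀ (S : Finset T), S.Nonempty → (cl S).Finite ∧ (cl S).ncard ≤ 2 * S.card - 1 := by
    intro S hS
    induction hS using Finset.Nonempty.cons_induction with
    | singleton a =>
        have hsub : cl {a} ⊆ {a} := by
          apply hcl_min
          · simp
          · intro x hx y hy m hm
            simp only [Set.mem_singleton_iff] at hx hy ⊢
            subst hx; subst hy
            rw [hmeet_uniq hm, hμ_self]
        refine ⟨(Set.finite_singleton a).subset hsub, ?_⟩
        calc (cl {a}).ncard ≤ ({a} : Set T).ncard :=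
              Set.ncard_le_ncard hsub (Set.finite_singleton a)
          _ = 1 := Set.ncard_singleton a
          _ ≤ 2 * Finset.card {a} - 1 := by simp
    | cons a s ha hs ih =>
        obtain ⟨hKfin, hKcard⟩ := ih
        set K := cl s with hKdef
        have hKne : K.Nonempty := Set.Nonempty.mono (hcl_sub s) (Finset.coe_nonempty.2 hs)
        obtain ⟨m, hmF, hmax'⟩ := exists_max_finset r htrans
          (hKfin.toFinset.image (fun x => μ a x))
          (by
            refine Finset.Nonempty.image ?_ _
            rwa [Set.Finite.toFinset_nonempty])
          (by
            intro x hx y hy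
            simp only [Finset.mem_image, Set.Finite.mem_toFinset] at hx hy
            obtain ⟨x', -, rfl⟩ := hx
            obtain ⟨y', -, rfl⟩ := hy
            exact hcomp (hμ_left a x') (hμ_left a y'))
        simp only [Finset.mem_image, Set.Finite.mem_toFinset] at hmF
        obtain ⟨x₀, hx₀K, hx₀m⟩ := hmF
        have hmax : ∀ x ∈ K, r (μ a x) m := by
          intro x hx
          exact hmax' (μ a x) (Finset.mem_image_of_mem _ (hKfin.mem_toFinset.2 hx))
        have hma : r m a := hx₀m ▸ hμ_left a x₀
        have hmx₀ : r m x₀ := hx₀m ▸ hμ_right a x₀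
        have hkey : ∀ x ∈ K, μ a x ∈ insert m K := by
          intro x hx
          have hu : μ x₀ x ∈ K := hcl_closed s x₀ hx₀K x hx (μ x₀ x) (hμ x₀ x)
          rcases hcomp (hμ_left x₀ x) hmx₀ with h | h
          · -- μ x₀ x ≤ m : then μ a x = μ x₀ x ∈ K
            right
            have h1 : r (μ a x) (μ x₀ x) :=
              hμ_le (htrans (hmax x hx) hmx₀) (hμ_right a x)
            have h2 : r (μ x₀ x) (μ a x) :=
              hμ_le (htrans h hma) (hμ_right x₀ x)
            rw [hanti h1 h2]; exact hu
          · -- m ≤ μ x₀ x : then μ a x = m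
            left
            exact hanti (hmax x hx) (hμ_le hma (htrans h (hμ_right x₀ x)))
        have hμm : ∀ x ∈ K, μ m x = μ a x := by
          intro x hx
          exact hanti (hμ_le (htrans (hμ_left m x) hma) (hμ_right m x))
            (hμ_le (hmax x hx) (hμ_right a x))
        set C : Set T := insert a (insert m K) with hCdef
        have hCclosed : MeetClosed r C := by
          have step : ∀ y ∈ C, ∀ z ∈ C, μ y z ∈ C := by
            intro y hy z hz
            rcases hy with rfl | hy
            · rcases hz with rfl | hz
              · rw [hμ_self]; exact Set.mem_insert _ _
              · rcases hz with rfl | hz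
                · rw [hμ_of_le hma]; exact Set.mem_insert_of_mem _ (Set.mem_insert _ _)
                · exact Set.mem_insert_of_mem _ (hkey z hz)
            · rcases hy with rfl | hy
              · rcases hz with rfl | hz
                · rw [hμ_comm, hμ_of_le hma]
                  exact Set.mem_insert_of_mem _ (Set.mem_insert _ _)
                · rcases hz with rfl | hz
                  · rw [hμ_self]; exact Set.mem_insert_of_mem _ (Set.mem_insert _ _)
                  · rw [hμm z hz]; exact Set.mem_insert_of_mem _ (hkey z hz)
              · rcases hz with rfl | hz
                · rw [hμ_comm]; exact Set.mem_insert_of_mem _ (hkey y hy)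
                · rcases hz with rfl | hz
                  · rw [hμ_comm, hμm y hy]; exact Set.mem_insert_of_mem _ (hkey y hy)
                  · exact Set.mem_insert_of_mem _ (Set.mem_insert_of_mem _
                      (hcl_closed s y hy z hz (μ y z) (hμ y z)))
          intro y hy z hz w hw
          rw [hmeet_uniq hw]
          exact step y hy z hz
        have hCsub : (↑(Finset.cons a s ha) : Set T) ⊆ C := by
          intro x hx
          rw [Finset.coe_cons] at hx
          rcases hx with rfl | hx
          · exact Set.mem_insert _ _
          · exact Set.mem_insert_of_mem _ (Set.mem_insert_of_mem _ (hcl_sub s hx))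
        have hsub : cl (Finset.cons a s ha) ⊆ C := hcl_min _ C hCsub hCclosed
        have hCfin : C.Finite := ((hKfin.insert m).insert a)
        refine ⟨hCfin.subset hsub, ?_⟩
        have h1 : (cl (Finset.cons a s ha)).ncard ≤ C.ncard := Set.ncard_le_ncard hsub hCfin
        have h2 : C.ncard ≤ K.ncard + 2 := by
          calc C.ncard ≤ (insert m K).ncard + 1 := Set.ncard_insert_le _ _
            _ ≤ K.ncard + 1 + 1 := by
                have := Set.ncard_insert_le m K
                omega
            _ = K.ncard + 2 := by ring
        have hscard : 1 ≤ s.card := Finset.Nonempty.card_pos hs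
        rw [Finset.card_cons]
        omega
  subst hcard
  exact (main S hS).2
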